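/- arXiv:1508.07969 — 3 statements merged into one kernel-verified Lean document; each statement's English description precedes it below -/
import Mathlib

section
/- Let c be a random variable with P(|c| = 1) = N_c/N and P(|c| = 0) = 1 − N_c/N, where 0 < N_c ≤ N. Then the sub-Gaussian norm ‖c‖_{ψ₂} := sup_{q ≥ 1} q^{−1/2}·E[|c|^q]^{1/q} equals (N_c/N)^{1/q*}·(q*)^{−1/2}, where q* = max(1, 2·log(N/N_c)). -/
open scoped BigOperators
open MeasureTheory

lemma aux_form (p : ℝ) (hp : 0 < p) (r : ℝ) (hr : 0 < r) :
    p ^ (1/r) / Real.sqrt r = Real.exp (Real.log p / r - Real.log r / 2) := by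
  rw [Real.rpow_def_of_pos hp, Real.sqrt_eq_rpow, Real.rpow_def_of_pos hr,
    ← Real.exp_sub]
  ring_nf

lemma aux_key (p : ℝ) (hp : 0 < p) (hp1 : p ≤ 1) (q : ℝ) (hq : 1 ≤ q) :
    p ^ (1/q) / Real.sqrt q ≤
      p ^ (1 / max 1 (2 * -Real.log p)) / Real.sqrt (max 1 (2 * -Real.log p)) := by
  set L : ℝ := -Real.log p with hLdef
  have hL : 0 ≤ L := by
    have := Real.log_nonpos hp.le hp1
    simp [hLdef]; linarith
  have hq0 : 0 < q := lt_of_lt_of_le one_pos hq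
  have hqs1 : (1:ℝ) ≤ max 1 (2 * L) := le_max_left _ _
  have hqs0 : (0:ℝ) < max 1 (2 * L) := lt_of_lt_of_le one_pos hqs1
  rw [aux_form p hp q hq0, aux_form p hp _ hqs0, Real.exp_le_exp]
  have hlp : Real.log p = -L := by simp [hLdef]
  rw [hlp]
  rcases le_or_gt (2 * L) 1 with h | h
  · rw [max_eq_left h, Real.log_one]
    have hinv : q⁻¹ ≤ 1 := inv_le_one_of_one_le₀ hq
    have hlog : -Real.log q ≤ q⁻¹ - 1 := by
      have := Real.log_le_sub_one_of_pos (show (0:ℝ) < q⁻¹ by positivity)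
      rwa [Real.log_inv] at this
    have hdiv : -L / q = -(L * q⁻¹) := by ring
    rw [hdiv]
    nlinarith [mul_nonneg (show (0:ℝ) ≤ 1/2 - L by linarith)
      (show (0:ℝ) ≤ 1 - q⁻¹ by linarith)]
  · rw [max_eq_right h.le]
    have hLpos : 0 < L := by linarith
    have hfrac : -L / (2*L) = -(1/2) := by
      rw [div_eq_iff (by positivity : (2*L) ≠ 0)]
      ring
    have hlog : Real.log (2*L) - Real.log q ≤ 2*L/q - 1 := by
      have h2 := Real.log_le_sub_one_of_pos (show (0:ℝ) < 2*L/q by positivity)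
      rwa [Real.log_div (by positivity) hq0.ne'] at h2
    have hring : 2*L/q = 2*(L/q) := by ring
    have hnd : -L / q = -(L / q) := by ring
    rw [hfrac, hnd]
    rw [hring] at hlog
    linarith

/-- If `|c|` is Bernoulli with `P(|c| = 1) = N_c/N` and
`P(|c| = 0) = 1 − N_c/N` (`0 < N_c ≤ N`), then the sub-Gaussian norm
`‖c‖_{ψ₂} = sup_{q ≥ 1} q^{−1/2} E[|c|^q]^{1/q}` equals
`(N_c/N)^{1/q*} (q*)^{−1/2}` with `q* = max(1, 2 log(N/N_c))`. -/
theorem subGaussian_norm_bernoulli_modulus {Ω : Type*} [MeasurableSpace Ω]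
    (μ : Measure Ω) [IsProbabilityMeasure μ] (c : Ω → ℂ) (hmeas : Measurable c)
    (N Nc : ℝ) (hNc : 0 < Nc) (hle : Nc ≤ N)
    (h1 : μ {ω | ‖c ω‖ = 1} = ENNReal.ofReal (Nc / N))
    (h0 : μ {ω | ‖c ω‖ = 0} = ENNReal.ofReal (1 - Nc / N)) :
    sSup {y : ℝ | ∃ q : ℝ, 1 ≤ q ∧
        y = (∫ ω, ‖c ω‖ ^ q ∂μ) ^ (1 / q) / Real.sqrt q} =
      (Nc / N) ^ (1 / max 1 (2 * Real.log (N / Nc))) /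
        Real.sqrt (max 1 (2 * Real.log (N / Nc))) := by
  have hN : 0 < N := hNc.trans_le hle
  have hp : 0 < Nc / N := div_pos hNc hN
  have hp1 : Nc / N ≤ 1 := (div_le_one hN).mpr hle
  have hlogeq : Real.log (N / Nc) = -Real.log (Nc / N) := by
    rw [← Real.log_inv, inv_div]
  have habs : Measurable fun ω => ‖c ω‖ :=
    continuous_norm.measurable.comp hmeas
  have hA : MeasurableSet {ω | ‖c ω‖ = 1} :=
    habs (measurableSet_singleton 1)
  have hB : MeasurableSet {ω | ‖c ω‖ = 0} :=
    habs (measurableSet_singleton 0)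
  have hd : Disjoint {ω | ‖c ω‖ = 1} {ω | ‖c ω‖ = 0} := by
    rw [Set.disjoint_left]
    intro ω h1' h0'
    simp only [Set.mem_setOf_eq] at h1' h0'
    rw [h1'] at h0'; norm_num at h0'
  have hunion : μ ({ω | ‖c ω‖ = 1} ∪ {ω | ‖c ω‖ = 0}) = 1 := by
    rw [measure_union hd hB, h1, h0,
      ← ENNReal.ofReal_add hp.le (by linarith)]
    norm_num
  have hcompl : μ ({ω | ‖c ω‖ = 1} ∪ {ω | ‖c ω‖ = 0})ᶜ = 0 := by
    rw [measure_compl (hA.union hB) (measure_ne_top _ _), hunion, measure_univ, tsub_self]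
  have hInt : ∀ q : ℝ, 1 ≤ q → (∫ ω, ‖c ω‖ ^ q ∂μ) = Nc / N := by
    intro q hq
    have hq0 : q ≠ 0 := by positivity
    have hae : (fun ω => ‖c ω‖ ^ q) =ᵐ[μ]
        ({ω | ‖c ω‖ = 1}).indicator (fun _ => (1:ℝ)) := by
      rw [Filter.EventuallyEq, ae_iff]
      refine measure_mono_null ?_ hcompl
      intro ω hω
      simp only [Set.mem_setOf_eq] at hω
      simp only [Set.mem_compl_iff, Set.mem_union, Set.mem_setOf_eq]
      rintro (h1' | h0')
      · refine hω ?_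
        rw [Set.indicator_of_mem (show ω ∈ {ω | ‖c ω‖ = 1} from h1'),
          h1', Real.one_rpow]
      · refine hω ?_
        rw [Set.indicator_of_notMem
          (show ω ∉ {ω | ‖c ω‖ = 1} by simp [Set.mem_setOf_eq, h0']),
          h0', Real.zero_rpow hq0]
    rw [integral_congr_ae hae, integral_indicator_const _ hA, measureReal_def, h1, smul_eq_mul, mul_one,
      ENNReal.toReal_ofReal hp.le]
  rw [hlogeq]
  apply IsGreatest.csSup_eq
  constructor
  · exact ⟨max 1 (2 * -Real.log (Nc / N)), le_max_left _ _,
      by rw [hInt _ (le_max_left _ _)]⟩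
  · rintro y ⟨q, hq, rfl⟩
    rw [hInt q hq]
    exact aux_key (Nc / N) hp hp1 q hq
end

section
/- Let A ∈ ℂ^{M×N} with columns A(m). Suppose that for all m₁ ≠ m₂, |⟨A(m₁), A(m₂)⟩| ≤ δ/K, and for all m, |‖A(m)‖₂² − 1| ≤ ε. Then for every index set Γ ⊆ {1,…,N} with |Γ| ≤ K, every eigenvalue of A_Γ*·A_Γ lies in [1 − δ − ε, 1 + δ + ε]; equivalently, A satisfies the RIP of order K with constant δ_K ≤ δ + ε. -/
open scoped BigOperators

noncomputable def opNorm {𝕜 : Type*} [RCLike 𝕜] {m n : Type*} [Fintype m] [Fintype n]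
    [DecidableEq n] (A : Matrix m n 𝕜) : ℝ :=
  ‖LinearMap.toContinuousLinearMap (Matrix.toEuclideanLin A)‖

/-- Gershgorin bound with uniform off-diagonal entries. -/
lemma gersh_aux {n : Type*} [Fintype n] [DecidableEq n] {G : Matrix n n ℂ} {lam : ℂ}
    {v : n → ℂ} (hv : v ≠ 0) (heq : G.mulVec v = lam • v) {r : ℝ}
    (hoff : ∀ i j : n, i ≠ j → ‖G i j‖ ≤ r) :
    ∃ k, ‖lam - G k k‖ ≤ ((Fintype.card n - 1 : ℕ) : ℝ) * r := by
  have hev : Module.End.HasEigenvalue (Matrix.toLin' G) lam :=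
    Module.End.hasEigenvalue_of_hasEigenvector
      ⟨Module.End.mem_eigenspace_iff.mpr (by rw [Matrix.toLin'_apply, heq]), hv⟩
  obtain ⟨k, hk⟩ := eigenvalue_mem_ball hev
  refine ⟨k, ?_⟩
  rw [Metric.mem_closedBall, dist_eq_norm] at hk
  refine hk.trans ?_
  calc ∑ j ∈ Finset.univ.erase k, ‖G k j‖ ≤ ∑ _j ∈ Finset.univ.erase k, r :=
      Finset.sum_le_sum fun j hj => hoff k j (Ne.symm (Finset.mem_erase.mp hj).1)
    _ = ((Fintype.card n - 1 : ℕ) : ℝ) * r := by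
      rw [Finset.sum_const, nsmul_eq_mul, Finset.card_erase_of_mem (Finset.mem_univ k),
        Finset.card_univ]

/-- Eigenvalues of Hermitian matrices are real. -/
lemma im_zero_aux {n : Type*} [Fintype n] {G : Matrix n n ℂ} (hG : G.IsHermitian)
    {lam : ℂ} {v : n → ℂ} (hv : v ≠ 0) (heq : G.mulVec v = lam • v) : lam.im = 0 := by
  classical
  set s : ℝ := ∑ i, Complex.normSq (v i) with hs_def
  have hs : 0 < s := by
    obtain ⟨i, hi⟩ := Function.ne_iff.mp hv
    exact Finset.sum_pos' (fun j _ => Complex.normSq_nonneg _)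
      ⟨i, Finset.mem_univ i, Complex.normSq_pos.mpr hi⟩
  have hQ : ∑ i, (starRingEnd ℂ) (v i) * G.mulVec v i = lam * (s : ℂ) := by
    simp only [heq, Pi.smul_apply, smul_eq_mul, hs_def]
    push_cast
    rw [Finset.mul_sum]
    refine Finset.sum_congr rfl fun i _ => ?_
    have h2 : (starRingEnd ℂ) (v i) * v i = (Complex.normSq (v i) : ℂ) :=
      Complex.normSq_eq_conj_mul_self.symm
    rw [← h2]; ring
  have hQconj : (starRingEnd ℂ) (∑ i, (starRingEnd ℂ) (v i) * G.mulVec v i)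
      = ∑ i, (starRingEnd ℂ) (v i) * G.mulVec v i := by
    simp only [Matrix.mulVec, dotProduct, map_sum, map_mul, Complex.conj_conj,
      Finset.mul_sum]
    rw [Finset.sum_comm]
    refine Finset.sum_congr rfl fun i _ => Finset.sum_congr rfl fun j _ => ?_
    have h3 : star (G j i) = G i j := hG.apply i j
    rw [show (starRingEnd ℂ) (G j i) = star (G j i) from rfl, h3]
    ring
  rw [hQ, map_mul, Complex.conj_ofReal] at hQconj
  have hsne : (s : ℂ) ≠ 0 := by exact_mod_cast hs.ne'
  have : (starRingEnd ℂ) lam = lam := mul_right_cancel₀ hsne hQconj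
  exact Complex.conj_eq_iff_im.mp this

/-- If all pairwise column inner products of `A` are at most `δ/K`
in absolute value, and all squared column norms are within `ε` of `1`, then for every
column set `Γ` with `|Γ| ≤ K` every eigenvalue of the Gram matrix `A_Γ* A_Γ` lies in
`[1 − δ − ε, 1 + δ + ε]`; equivalently `‖A_Γ* A_Γ − I‖_op ≤ δ + ε`. -/
theorem gram_eigenvalues_rip {M N K : ℕ} (hK : 0 < K) (δ ε : ℝ)
    (hδ : 0 ≤ δ) (hδ1 : δ ≤ 1) (hε : 0 ≤ ε) (hε1 : ε ≤ 1)
    (A : Matrix (Fin M) (Fin N) ℂ)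
    (hinner : ∀ m₁ m₂ : Fin N, m₁ ≠ m₂ →
      ‖∑ k, (starRingEnd ℂ) (A k m₁) * A k m₂‖ ≤ δ / K)
    (hnorm : ∀ m : Fin N, |(∑ k, ‖A k m‖ ^ 2) - 1| ≤ ε) :
    ∀ Γ : Finset (Fin N), Γ.card ≤ K →
      (∀ (lam : ℂ) (v : {x // x ∈ Γ} → ℂ), v ≠ 0 →
        ((A.submatrix id (Subtype.val : {x // x ∈ Γ} → Fin N)).conjTranspose *
            A.submatrix id (Subtype.val : {x // x ∈ Γ} → Fin N)).mulVec v = lam • v →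
          lam.im = 0 ∧ 1 - δ - ε ≤ lam.re ∧ lam.re ≤ 1 + δ + ε) ∧
      opNorm ((A.submatrix id (Subtype.val : {x // x ∈ Γ} → Fin N)).conjTranspose *
          A.submatrix id (Subtype.val : {x // x ∈ Γ} → Fin N) - 1) ≤ δ + ε := by
  intro Γ hΓ
  classical
  set S : Matrix (Fin M) {x // x ∈ Γ} ℂ :=
    A.submatrix id (Subtype.val : {x // x ∈ Γ} → Fin N) with hS
  set G : Matrix {x // x ∈ Γ} {x // x ∈ Γ} ℂ := S.conjTranspose * S with hG
  have hGherm : G.IsHermitian := Matrix.isHermitian_conjTranspose_mul_self S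
  have hGentry : ∀ i j : {x // x ∈ Γ}, G i j
      = ∑ k, (starRingEnd ℂ) (A k i.val) * A k j.val := by
    intro i j
    simp [hG, hS, Matrix.mul_apply, Matrix.conjTranspose_apply, Matrix.submatrix_apply]
  have hGoff : ∀ i j : {x // x ∈ Γ}, i ≠ j → ‖G i j‖ ≤ δ / K := by
    intro i j hij
    rw [hGentry]
    exact hinner _ _ (fun h => hij (Subtype.ext h))
  have hGdiag : ∀ i : {x // x ∈ Γ},
      G i i = ((∑ k, ‖A k i.val‖ ^ 2 : ℝ) : ℂ) := by
    intro i
    rw [hGentry]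
    push_cast
    refine Finset.sum_congr rfl fun k _ => ?_
    rw [← Complex.normSq_eq_conj_mul_self, Complex.normSq_eq_norm_sq]
    push_cast; ring
  have hrK : (0:ℝ) ≤ δ / K := div_nonneg hδ (by positivity)
  have hrow : ((Fintype.card {x // x ∈ Γ} - 1 : ℕ) : ℝ) * (δ / K) ≤ δ := by
    have hcard : ((Fintype.card {x // x ∈ Γ} - 1 : ℕ) : ℝ) ≤ (K : ℝ) := by
      have h1 : Fintype.card {x // x ∈ Γ} - 1 ≤ K := by
        have := Fintype.card_coe Γ
        omega
      exact_mod_cast h1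
    calc ((Fintype.card {x // x ∈ Γ} - 1 : ℕ) : ℝ) * (δ / K)
        ≤ (K : ℝ) * (δ / K) := by gcongr
      _ = δ := by field_simp
  constructor
  · intro lam v hv heq
    have hkey : 1 - δ - ε ≤ lam.re ∧ lam.re ≤ 1 + δ + ε := by
      obtain ⟨k, hk⟩ := gersh_aux hv heq hGoff
      have hk' : ‖lam - G k k‖ ≤ δ := hk.trans hrow
      have hc : |(∑ k', ‖A k' k.val‖ ^ 2) - 1| ≤ ε := hnorm k.val
      rw [hGdiag] at hk'
      set c : ℝ := ∑ k', ‖A k' k.val‖ ^ 2 with hc_def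
      have hre : |lam.re - c| ≤ δ := by
        have h1 := Complex.abs_re_le_norm (lam - (c : ℂ))
        rw [Complex.sub_re, Complex.ofReal_re] at h1
        exact h1.trans hk'
      rw [abs_le] at hre hc
      exact ⟨by linarith [hre.1, hc.1], by linarith [hre.2, hc.2]⟩
    exact ⟨im_zero_aux hGherm hv heq, hkey.1, hkey.2⟩
  · set B : Matrix {x // x ∈ Γ} {x // x ∈ Γ} ℂ := G - 1 with hB_def
    have hBherm : B.IsHermitian := hGherm.sub Matrix.isHermitian_one
    have hBoff : ∀ i j : {x // x ∈ Γ}, i ≠ j → ‖B i j‖ ≤ δ / K := by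
      intro i j hij
      have h4 : B i j = G i j := by
        simp [hB_def, Matrix.sub_apply, Matrix.one_apply_ne hij]
      rw [h4]; exact hGoff i j hij
    have hBdiag : ∀ k : {x // x ∈ Γ}, ‖B k k‖ ≤ ε := by
      intro k
      have h5 : B k k = (((∑ k', ‖A k' k.val‖ ^ 2) - 1 : ℝ) : ℂ) := by
        rw [hB_def, Matrix.sub_apply, Matrix.one_apply_eq, hGdiag k]
        push_cast; ring
      rw [h5, Complex.norm_real]
      exact hnorm k.val
    set b := hBherm.eigenvectorBasis with hb
    set μ := hBherm.eigenvalues with hμ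
    have heigbound : ∀ i, |μ i| ≤ δ + ε := by
      intro i
      have hv : B.mulVec ⇑(b i) = ((μ i : ℝ) : ℂ) • ⇑(b i) := by
        have h := hBherm.mulVec_eigenvectorBasis i
        rw [h]; funext j; simp [Complex.real_smul, hb, hμ]
      have hne : ⇑(b i) ≠ 0 := by
        have h0 := b.orthonormal.ne_zero i
        intro h; apply h0; ext j; exact congrFun h j
      obtain ⟨k, hk⟩ := gersh_aux hne hv hBoff
      have hk' : ‖((μ i : ℝ) : ℂ) - B k k‖ ≤ δ := hk.trans hrow
      calc |μ i| = ‖((μ i : ℝ) : ℂ)‖ := (Complex.norm_real _).symm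
        _ ≤ ‖((μ i : ℝ) : ℂ) - B k k‖ + ‖B k k‖ := by
            simpa using norm_add_le (((μ i : ℝ) : ℂ) - B k k) (B k k)
        _ ≤ δ + ε := add_le_add hk' (hBdiag k)
    have hsym : (Matrix.toEuclideanLin B).IsSymmetric :=
      Matrix.isHermitian_iff_isSymmetric.mp hBherm
    have hTb : ∀ i, Matrix.toEuclideanLin B (b i) = ((μ i : ℝ) : ℂ) • b i := by
      intro i
      have h := hBherm.mulVec_eigenvectorBasis i
      rw [Matrix.toEuclideanLin_apply]
      ext j
      have h6 := congrFun h j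
      simpa [Complex.real_smul] using h6
    rw [show opNorm B = ‖LinearMap.toContinuousLinearMap (Matrix.toEuclideanLin B)‖ from rfl]
    refine ContinuousLinearMap.opNorm_le_bound _ (add_nonneg hδ hε) fun x => ?_
    have hrepr : ∀ i, b.repr (Matrix.toEuclideanLin B x) i = ((μ i : ℝ) : ℂ) * b.repr x i := by
      intro i
      rw [b.repr_apply_apply, b.repr_apply_apply, ← hsym (b i) x, hTb i, inner_smul_left,
        Complex.conj_ofReal]
    have hTx : (LinearMap.toContinuousLinearMap (Matrix.toEuclideanLin B)) x
        = Matrix.toEuclideanLin B x := rfl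
    calc ‖(LinearMap.toContinuousLinearMap (Matrix.toEuclideanLin B)) x‖
        = ‖b.repr (Matrix.toEuclideanLin B x)‖ := by rw [hTx, b.repr.norm_map]
      _ ≤ (δ + ε) * ‖b.repr x‖ := by
          rw [EuclideanSpace.norm_eq, EuclideanSpace.norm_eq,
            show (δ + ε) * √(∑ i, ‖b.repr x i‖ ^ 2) = √((δ + ε) ^ 2 * ∑ i, ‖b.repr x i‖ ^ 2) by
              rw [Real.sqrt_mul (sq_nonneg _), Real.sqrt_sq (add_nonneg hδ hε)]]
          apply Real.sqrt_le_sqrt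
          rw [Finset.mul_sum]
          refine Finset.sum_le_sum fun i _ => ?_
          rw [hrepr i, norm_mul]
          have h7 : ‖((μ i : ℝ) : ℂ)‖ ≤ δ + ε := by rw [Complex.norm_real]; exact heigbound i
          calc (‖((μ i : ℝ) : ℂ)‖ * ‖b.repr x i‖) ^ 2
              = ‖((μ i : ℝ) : ℂ)‖ ^ 2 * ‖b.repr x i‖ ^ 2 := by ring
            _ ≤ (δ + ε) ^ 2 * ‖b.repr x i‖ ^ 2 := by gcongr
      _ = (δ + ε) * ‖x‖ := by rw [b.repr.norm_map]
end

section
/- Let F ∈ ℂ^{M×N} be the matrix with columns F(r) = (1/√(M·N_c))·(1, e^{2πi·rp/M}, …, e^{2πi·rp(M−1)/M})ᵀ for r = 0,…,N−1, where p is a positive integer coprime with M. Then ‖F‖_op² = ⌈N/M⌉/N_c. -/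
open Complex Finset

open scoped BigOperators


lemma geom_aux {M : ℕ} (hM : 0 < M) {η : ℂ} (hη : η ^ M = 1) :
    ∑ k : Fin M, η ^ (k : ℕ) = if η = 1 then (M : ℂ) else 0 := by
  rw [Fin.sum_univ_eq_sum_range]
  split_ifs with h
  · simp [h]
  · rw [geom_sum_eq h, hη, sub_self, zero_div]

lemma parseval_aux {M : ℕ} (hM : 0 < M) {ζ : ℂ} (hζ : IsPrimitiveRoot ζ M)
    (y : Fin M → ℂ) :
    ∑ k : Fin M, Complex.normSq (∑ j : Fin M, ζ ^ ((j : ℕ) * (k : ℕ)) * y j)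
      = M * ∑ j : Fin M, Complex.normSq (y j) := by
  have hζM : ζ ^ M = 1 := hζ.pow_eq_one
  have hζ0 : ζ ≠ 0 := hζ.ne_zero hM.ne'
  have hns : Complex.normSq ζ = 1 := by
    rw [Complex.normSq_eq_norm_sq, hζ.norm'_eq_one hM.ne', one_pow]
  have hcj : (starRingEnd ℂ) ζ = ζ⁻¹ := by
    refine eq_inv_of_mul_eq_one_left ?_
    rw [mul_comm, Complex.mul_conj, hns, Complex.ofReal_one]
  -- inner character sum
  have hchar : ∀ j j' : Fin M,
      ∑ k : Fin M, ζ ^ ((j : ℕ) * (k : ℕ)) * (starRingEnd ℂ) (ζ ^ ((j' : ℕ) * (k : ℕ)))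
        = if j = j' then (M : ℂ) else 0 := by
    intro j j'
    have h1 : ∀ k : Fin M, ζ ^ ((j : ℕ) * (k : ℕ)) * (starRingEnd ℂ) (ζ ^ ((j' : ℕ) * (k : ℕ)))
        = (ζ ^ (j : ℕ) * (ζ ^ (j' : ℕ))⁻¹) ^ (k : ℕ) := by
      intro k
      rw [map_pow, hcj, mul_pow, pow_mul, pow_mul, inv_pow]
    simp_rw [h1]
    have hη : (ζ ^ (j : ℕ) * (ζ ^ (j' : ℕ))⁻¹) ^ M = 1 := by
      rw [mul_pow, inv_pow, ← pow_mul, ← pow_mul, mul_comm (j : ℕ), mul_comm (j' : ℕ),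
        pow_mul, pow_mul, hζM, one_pow, one_pow, inv_one, mul_one]
    rw [geom_aux hM hη]
    congr 1
    rw [eq_iff_iff]
    constructor
    · intro h
      have h2 : ζ ^ (j : ℕ) = ζ ^ (j' : ℕ) :=
        (mul_inv_eq_one₀ (pow_ne_zero _ hζ0)).mp h
      exact Fin.ext (hζ.pow_inj j.isLt j'.isLt h2)
    · intro h
      subst h
      exact mul_inv_cancel₀ (pow_ne_zero _ hζ0)
  -- complex identity
  have hC : ∑ k : Fin M, ((Complex.normSq (∑ j : Fin M, ζ ^ ((j : ℕ) * (k : ℕ)) * y j) : ℝ) : ℂ)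
      = (M : ℂ) * ∑ j : Fin M, ((Complex.normSq (y j) : ℝ) : ℂ) := by
    simp_rw [← Complex.mul_conj]
    calc ∑ k : Fin M, (∑ j : Fin M, ζ ^ ((j : ℕ) * (k : ℕ)) * y j) *
            (starRingEnd ℂ) (∑ j : Fin M, ζ ^ ((j : ℕ) * (k : ℕ)) * y j)
        = ∑ k : Fin M, ∑ j : Fin M, ∑ j' : Fin M,
            (y j * (starRingEnd ℂ) (y j')) *
              (ζ ^ ((j : ℕ) * (k : ℕ)) * (starRingEnd ℂ) (ζ ^ ((j' : ℕ) * (k : ℕ)))) := by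
          refine Finset.sum_congr rfl fun k _ => ?_
          rw [map_sum, Finset.sum_mul_sum]
          refine Finset.sum_congr rfl fun j _ => Finset.sum_congr rfl fun j' _ => ?_
          rw [map_mul]; ring
      _ = ∑ j : Fin M, ∑ j' : Fin M, (y j * (starRingEnd ℂ) (y j')) *
            ∑ k : Fin M, ζ ^ ((j : ℕ) * (k : ℕ)) * (starRingEnd ℂ) (ζ ^ ((j' : ℕ) * (k : ℕ))) := by
          rw [Finset.sum_comm]
          refine Finset.sum_congr rfl fun j _ => ?_
          rw [Finset.sum_comm]
          refine Finset.sum_congr rfl fun j' _ => ?_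
          rw [Finset.mul_sum]
      _ = (M : ℂ) * ∑ j : Fin M, y j * (starRingEnd ℂ) (y j) := by
          simp_rw [hchar]
          simp only [mul_ite, mul_zero, Finset.sum_ite_eq, Finset.mem_univ, if_true]
          rw [Finset.mul_sum]
          exact Finset.sum_congr rfl fun j _ => by ring
  have := hC
  push_cast at this
  exact_mod_cast this



lemma count_div {M N : ℕ} (hM : 0 < M) :
    (Finset.univ.filter fun r : Fin N => M ∣ (r : ℕ)).card = ⌈(N : ℝ) / M⌉₊ := by
  have hMR : (0:ℝ) < M := by exact_mod_cast hM
  have hq : ∀ q : ℕ, q < ⌈(N : ℝ) / M⌉₊ ↔ q * M < N := by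
    intro q
    rw [Nat.lt_ceil, lt_div_iff₀ hMR]
    exact_mod_cast Iff.rfl
  rw [← Finset.card_range ⌈(N : ℝ) / M⌉₊]
  apply Finset.card_bij (fun (r : Fin N) _ => (r : ℕ) / M)
  · intro r hr
    simp only [Finset.mem_filter, Finset.mem_univ, true_and] at hr
    rw [Finset.mem_range, hq, Nat.div_mul_cancel hr]
    exact r.isLt
  · intro r hr r' hr' h
    simp only [Finset.mem_filter, Finset.mem_univ, true_and] at hr hr'
    apply Fin.ext
    rw [← Nat.div_mul_cancel hr, ← Nat.div_mul_cancel hr', h]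
  · intro q hq'
    rw [Finset.mem_range, hq] at hq'
    refine ⟨⟨q * M, hq'⟩, ?_, ?_⟩
    · simp [Dvd.intro q rfl]
    · simp [Nat.mul_div_cancel _ hM]

lemma count_fiber_le {M N p : ℕ} (hM : 0 < M) (hcop : Nat.Coprime p M) (j : ℕ) :
    (Finset.univ.filter fun r : Fin N => ((r : ℕ) * p) % M = j).card ≤ ⌈(N : ℝ) / M⌉₊ := by
  have hMR : (0:ℝ) < M := by exact_mod_cast hM
  have hNt : N ≤ ⌈(N : ℝ) / M⌉₊ * M := by
    have h1 : (N : ℝ) / M ≤ (⌈(N : ℝ) / M⌉₊ : ℝ) := Nat.le_ceil _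
    rw [div_le_iff₀ hMR] at h1
    exact_mod_cast h1
  rw [← Finset.card_range ⌈(N : ℝ) / M⌉₊]
  apply Finset.card_le_card_of_injOn (fun r : Fin N => (r : ℕ) / M)
  · intro r _
    simp only [Finset.coe_range, Set.mem_Iio]
    rw [Nat.div_lt_iff_lt_mul hM]
    exact lt_of_lt_of_le r.isLt hNt
  · intro r hr r' hr' h
    simp only [Finset.coe_filter, Set.mem_setOf_eq, Finset.mem_univ, true_and] at hr hr'
    have hmod : (r : ℕ) % M = (r' : ℕ) % M := by
      have h1 : (r : ℕ) * p ≡ (r' : ℕ) * p [MOD M] := by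
        unfold Nat.ModEq
        rw [hr, hr']
    
      exact Nat.ModEq.cancel_right_of_coprime hcop.symm h1
    have h' : (r : ℕ) / M = (r' : ℕ) / M := h
    apply Fin.ext
    conv_lhs => rw [← Nat.div_add_mod (r : ℕ) M]
    conv_rhs => rw [← Nat.div_add_mod (r' : ℕ) M]
    rw [h', hmod]

lemma cs_aux {α : Type*} (s : Finset α) (x : α → ℂ) :
    Complex.normSq (∑ r ∈ s, x r) ≤ s.card * ∑ r ∈ s, Complex.normSq (x r) := by
  have h1 : ‖∑ r ∈ s, x r‖ ≤ ∑ r ∈ s, ‖x r‖ := by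
    simpa using norm_sum_le s x
  calc Complex.normSq (∑ r ∈ s, x r) = ‖∑ r ∈ s, x r‖ ^ 2 := (Complex.sq_norm _).symm
    _ ≤ (∑ r ∈ s, ‖x r‖) ^ 2 := by
        apply pow_le_pow_left₀ (norm_nonneg _) h1
    _ ≤ s.card * ∑ r ∈ s, ‖x r‖ ^ 2 := sq_sum_le_card_mul_sum_sq
    _ = s.card * ∑ r ∈ s, Complex.normSq (x r) := by simp_rw [Complex.sq_norm]




/-- For the matrix `F` with entries
`F (k, r) = (1/√(M N_c)) exp(2πi r p k / M)` where `p` is coprime with `M` and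
`M ≤ N`, the squared operator norm is `‖F‖_op² = ⌈N/M⌉ / N_c`. -/
theorem chirp_frequency_matrix_opNorm {M N Nc p : ℕ} (hM : 0 < M) (hMN : M ≤ N)
    (hNc : 0 < Nc) (hp : 0 < p) (hcop : Nat.Coprime p M)
    (F : Matrix (Fin M) (Fin N) ℂ)
    (hF : ∀ (k : Fin M) (r : Fin N),
      F k r = (1 / Real.sqrt (M * Nc) : ℝ) *
        Complex.exp (2 * Real.pi * Complex.I * (r : ℕ) * (p : ℕ) * (k : ℕ) / M)) :
    opNorm F ^ 2 = (⌈(N : ℝ) / M⌉₊ : ℝ) / Nc := by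
  classical
  have hMR : (0:ℝ) < M := by exact_mod_cast hM
  have hNcR : (0:ℝ) < Nc := by exact_mod_cast hNc
  have hNR : (0:ℝ) < N := by exact_mod_cast lt_of_lt_of_le hM hMN
  set t : ℕ := ⌈(N : ℝ) / M⌉₊ with ht_def
  have ht1 : 1 ≤ t := Nat.one_le_ceil_iff.mpr (by positivity)
  have htR : (0:ℝ) < t := by exact_mod_cast ht1
  set c : ℝ := Real.sqrt (M * Nc) with hc_def
  have hcpos : 0 < c := Real.sqrt_pos.mpr (by positivity)
  have hcc : c * c = M * Nc := Real.mul_self_sqrt (by positivity)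
  set ζ : ℂ := Complex.exp (2 * (Real.pi : ℂ) * Complex.I / M) with hζdef
  have hζ : IsPrimitiveRoot ζ M := Complex.isPrimitiveRoot_exp M hM.ne'
  have hζM : ζ ^ M = 1 := hζ.pow_eq_one
  have hpow_mod : ∀ a : ℕ, ζ ^ a = ζ ^ (a % M) := by
    intro a
    conv_lhs => rw [← Nat.div_add_mod a M]
    rw [pow_add, pow_mul, hζM, one_pow, one_mul]
  have hF' : ∀ (k : Fin M) (r : Fin N),
      F k r = ((1 / c : ℝ) : ℂ) * ζ ^ ((((r:ℕ) * p) % M) * (k:ℕ)) := by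
    intro k r
    rw [hF]
    congr 1
    have h1 : ζ ^ ((r:ℕ) * p * (k:ℕ)) =
        Complex.exp (2 * (Real.pi : ℂ) * Complex.I * (r : ℕ) * (p : ℕ) * (k : ℕ) / M) := by
      rw [hζdef, ← Complex.exp_nat_mul]
      congr 1
      push_cast
      ring
    rw [← h1, hpow_mod ((r:ℕ) * p * (k:ℕ)), hpow_mod ((((r:ℕ) * p) % M) * (k:ℕ))]
    congr 1
    have h2 : ((r:ℕ) * p) % M * (k:ℕ) ≡ (r:ℕ) * p * (k:ℕ) [MOD M] :=
      Nat.ModEq.mul_right _ (Nat.mod_modEq _ _)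
    exact h2.symm
  set fib : Fin N → Fin M := fun r => ⟨((r:ℕ) * p) % M, Nat.mod_lt _ hM⟩ with hfibdef
  set L := LinearMap.toContinuousLinearMap (Matrix.toEuclideanLin F) with hLdef
  have hL : ∀ (x : EuclideanSpace ℂ (Fin N)) (k : Fin M),
      L x k = ∑ r : Fin N, F k r * x r := fun x k => rfl
  have hmulform : ∀ (x : EuclideanSpace ℂ (Fin N)) (k : Fin M),
      L x k = ((1 / c : ℝ) : ℂ) * ∑ j : Fin M, ζ ^ ((j:ℕ) * (k:ℕ)) *
        ∑ r ∈ Finset.univ.filter (fun r => fib r = j), x r := by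
    intro x k
    rw [hL, Finset.mul_sum,
      ← Finset.sum_fiberwise Finset.univ fib (fun r => F k r * x r)]
    refine Finset.sum_congr rfl fun j _ => ?_
    rw [Finset.mul_sum, Finset.mul_sum]
    refine Finset.sum_congr rfl fun r hr => ?_
    simp only [Finset.mem_filter] at hr
    have hval : ((r:ℕ) * p) % M = (j:ℕ) := by
      rw [← hr.2]
    rw [hF' k r, hval]
    ring
  have hnormsq : ∀ x : EuclideanSpace ℂ (Fin N),
      ‖L x‖^2 = (1/Nc) * ∑ j : Fin M,
        Complex.normSq (∑ r ∈ Finset.univ.filter (fun r => fib r = j), x r) := by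
    intro x
    rw [PiLp.norm_sq_eq_of_L2]
    calc ∑ k : Fin M, ‖L x k‖^2
        = ∑ k : Fin M, (1/(M*Nc)) * Complex.normSq (∑ j : Fin M, ζ ^ ((j:ℕ) * (k:ℕ)) *
            ∑ r ∈ Finset.univ.filter (fun r => fib r = j), x r) := by
          refine Finset.sum_congr rfl fun k _ => ?_
          rw [hmulform, Complex.sq_norm, Complex.normSq_mul,
            Complex.normSq_ofReal]
          congr 1
          rw [div_mul_div_comm, one_mul, hcc]
      _ = (1/(M*Nc)) * (M * ∑ j : Fin M,
            Complex.normSq (∑ r ∈ Finset.univ.filter (fun r => fib r = j), x r)) := by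
          rw [← Finset.mul_sum, parseval_aux hM hζ]
      _ = (1/Nc) * ∑ j : Fin M,
            Complex.normSq (∑ r ∈ Finset.univ.filter (fun r => fib r = j), x r) := by
          rw [← mul_assoc]
          congr 1
          field_simp
  have hxnorm : ∀ x : EuclideanSpace ℂ (Fin N),
      ‖x‖^2 = ∑ r : Fin N, Complex.normSq (x r) := by
    intro x
    rw [PiLp.norm_sq_eq_of_L2]
    exact Finset.sum_congr rfl fun r _ => by
      rw [← Complex.sq_norm]
  set C : ℝ := Real.sqrt (t / Nc) with hC_def
  have hCpos : 0 < C := Real.sqrt_pos.mpr (by positivity)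
  have hC2 : C^2 = t / Nc := Real.sq_sqrt (by positivity)
  have hcardle : ∀ j : Fin M,
      ((Finset.univ.filter (fun r => fib r = j)).card : ℝ) ≤ t := by
    intro j
    have hset : Finset.univ.filter (fun r => fib r = j)
        = Finset.univ.filter (fun r : Fin N => ((r:ℕ) * p) % M = (j:ℕ)) := by
      apply Finset.filter_congr
      intro r _
      simp [hfibdef, Fin.ext_iff]
    rw [hset]
    exact_mod_cast count_fiber_le (N := N) hM hcop (j:ℕ)
  have hub : ∀ x : EuclideanSpace ℂ (Fin N), ‖L x‖ ≤ C * ‖x‖ := by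
    intro x
    have h1 : ‖L x‖^2 ≤ C^2 * ‖x‖^2 := by
      rw [hnormsq, hxnorm, hC2]
      have hsum : ∑ j : Fin M,
          Complex.normSq (∑ r ∈ Finset.univ.filter (fun r => fib r = j), x r)
          ≤ t * ∑ r : Fin N, Complex.normSq (x r) := by
        calc ∑ j : Fin M, Complex.normSq (∑ r ∈ Finset.univ.filter (fun r => fib r = j), x r)
            ≤ ∑ j : Fin M, ((Finset.univ.filter (fun r => fib r = j)).card : ℝ) *
                ∑ r ∈ Finset.univ.filter (fun r => fib r = j), Complex.normSq (x r) :=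
              Finset.sum_le_sum fun j _ => cs_aux _ _
          _ ≤ ∑ j : Fin M, (t : ℝ) *
                ∑ r ∈ Finset.univ.filter (fun r => fib r = j), Complex.normSq (x r) := by
              refine Finset.sum_le_sum fun j _ => ?_
              refine mul_le_mul_of_nonneg_right (hcardle j) ?_
              exact Finset.sum_nonneg fun r _ => Complex.normSq_nonneg _
          _ = (t : ℝ) * ∑ j : Fin M,
                ∑ r ∈ Finset.univ.filter (fun r => fib r = j), Complex.normSq (x r) := by
              rw [Finset.mul_sum]
          _ = (t : ℝ) * ∑ r : Fin N, Complex.normSq (x r) := by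
              rw [Finset.sum_fiberwise]
      calc (1/Nc) * ∑ j : Fin M,
            Complex.normSq (∑ r ∈ Finset.univ.filter (fun r => fib r = j), x r)
          ≤ (1/Nc) * ((t:ℝ) * ∑ r : Fin N, Complex.normSq (x r)) :=
            mul_le_mul_of_nonneg_left hsum (by positivity)
        _ = (t:ℝ)/Nc * ∑ r : Fin N, Complex.normSq (x r) := by ring
    have h2 := Real.sqrt_le_sqrt h1
    rwa [Real.sqrt_sq (norm_nonneg _),
      show C^2 * ‖x‖^2 = (C * ‖x‖)^2 by ring,
      Real.sqrt_sq (by positivity)] at h2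
  have hle : ‖L‖ ≤ C := L.opNorm_le_bound (le_of_lt hCpos) hub
  -- witness vector
  set x₀ : EuclideanSpace ℂ (Fin N) := WithLp.toLp 2 (fun r : Fin N => if M ∣ (r:ℕ) then (1:ℂ) else 0) with hx₀def
  set z0 : Fin M := ⟨0, hM⟩ with hz0def
  have hdvd_iff : ∀ r : Fin N, fib r = z0 ↔ M ∣ (r:ℕ) := by
    intro r
    rw [Fin.ext_iff]
    show ((r:ℕ) * p) % M = 0 ↔ M ∣ (r:ℕ)
    constructor
    · intro h
      exact (Nat.Coprime.dvd_of_dvd_mul_right hcop.symm) (Nat.dvd_of_mod_eq_zero h)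
    · intro h
      exact Nat.mod_eq_zero_of_dvd (h.mul_right p)
  have hfib0 : Finset.univ.filter (fun r => fib r = z0)
      = Finset.univ.filter (fun r : Fin N => M ∣ (r:ℕ)) := by
    apply Finset.filter_congr
    intro r _
    simp [hdvd_iff r]
  have hy0 : ∀ j : Fin M,
      (∑ r ∈ Finset.univ.filter (fun r => fib r = j), x₀ r)
        = if j = z0 then (t : ℂ) else 0 := by
    intro j
    by_cases hj : j = z0
    · subst hj
      simp only [if_true]
      rw [hfib0]
      have : ∀ r ∈ Finset.univ.filter (fun r : Fin N => M ∣ (r:ℕ)), x₀ r = 1 := by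
        intro r hr
        simp only [Finset.mem_filter] at hr
        simp [hx₀def, hr.2]
      rw [Finset.sum_congr rfl this, Finset.sum_const, nsmul_eq_mul, mul_one,
        count_div (N := N) hM]
    · simp only [hj, if_false]
      apply Finset.sum_eq_zero
      intro r hr
      simp only [Finset.mem_filter] at hr
      have hnd : ¬ M ∣ (r:ℕ) := by
        intro hdvd
        exact hj (hr.2 ▸ ((hdvd_iff r).mpr hdvd))
      simp [hx₀def, hnd]
  have hnsq_t : Complex.normSq ((t:ℕ) : ℂ) = (t:ℝ)^2 := by
    rw [show ((t:ℕ):ℂ) = (((t:ℕ):ℝ):ℂ) by push_cast; rfl, Complex.normSq_ofReal]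
    ring
  have hLx₀ : ‖L x₀‖^2 = (t:ℝ)^2 / Nc := by
    rw [hnormsq]
    rw [Finset.sum_congr rfl fun j _ => by rw [hy0 j]]
    simp only [apply_ite Complex.normSq, Complex.normSq_zero, Finset.sum_ite_eq',
      Finset.mem_univ, if_true]
    rw [hnsq_t]
    ring
  have hx₀n : ‖x₀‖^2 = (t:ℝ) := by
    rw [hxnorm]
    have h1 : ∀ r : Fin N, Complex.normSq (x₀ r) = if M ∣ (r:ℕ) then (1:ℝ) else 0 := by
      intro r
      simp [hx₀def, apply_ite Complex.normSq]
    rw [Finset.sum_congr rfl fun r _ => h1 r, Finset.sum_boole, count_div (N := N) hM]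
  have hx₀norm : ‖x₀‖ = Real.sqrt t := by
    rw [show ((t:ℝ)) = ‖x₀‖^2 from hx₀n.symm, Real.sqrt_sq (norm_nonneg _)]
  have hLx₀norm : ‖L x₀‖ = Real.sqrt ((t:ℝ)^2 / Nc) := by
    rw [show ((t:ℝ)^2/Nc) = ‖L x₀‖^2 from hLx₀.symm, Real.sqrt_sq (norm_nonneg _)]
  have hkey : C * ‖x₀‖ = ‖L x₀‖ := by
    rw [hx₀norm, hLx₀norm, hC_def, ← Real.sqrt_mul (by positivity)]
    congr 1
    field_simp
  have hge : C ≤ ‖L‖ := by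
    have h3 := L.le_opNorm x₀
    rw [← hkey] at h3
    have hx0pos : 0 < ‖x₀‖ := by rw [hx₀norm]; positivity
    exact le_of_mul_le_mul_right h3 hx0pos
  have hON : opNorm F = ‖L‖ := by rw [hLdef]; rfl
  rw [hON, le_antisymm hle hge, hC2]
end
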